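/- Let G be a finite simple graph and let M̂ be a regal matching on the crown Crown(G). If there exists an M̂-augmenting path in Crown(G), then there exists an M̂-augmenting path in Crown(G) all of whose internal vertices lie outside the monde (i.e., it visits the monde only at its two endpoints). -/

import Mathlib

/-- A vertex `v` is matched by the edge set `M` if it is an endpoint of some edge of `M`. -/
def Matched {V : Type*} (M : Set (Sym2 V)) (v : V) : Prop := ∃ e ∈ M, v ∈ e

/-- `M` is a matching on `G`: a set of edges of `G`, no two of which share a vertex. -/
def IsMatching {V : Type*} (G : SimpleGraph V) (M : Set (Sym2 V)) : Prop :=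
  M ⊆ G.edgeSet ∧ ∀ e ∈ M, ∀ f ∈ M, e ≠ f → ∀ v : V, v ∈ e → v ∉ f

/-- The crown of `G`: three disjoint copies of the vertex set of `G` — the circlet
(`Sum.inl`), the arches (`Sum.inr ∘ Sum.inl`) and the monde (`Sum.inr ∘ Sum.inr`).  Two
circlet vertices are adjacent iff the corresponding vertices are adjacent in `G`; each
circlet vertex is adjacent to its own arch copy; every arch vertex is adjacent to every
monde vertex; there are no other edges. -/
def crown {V : Type*} (G : SimpleGraph V) : SimpleGraph (V ⊕ V ⊕ V) where
  Adj x y :=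
    match x, y with
    | Sum.inl u, Sum.inl w => G.Adj u w
    | Sum.inl u, Sum.inr (Sum.inl w) => u = w
    | Sum.inr (Sum.inl u), Sum.inl w => u = w
    | Sum.inr (Sum.inl _), Sum.inr (Sum.inr _) => True
    | Sum.inr (Sum.inr _), Sum.inr (Sum.inl _) => True
    | _, _ => False
  symm := by
    constructor
    rintro (u | u | u) (w | w | w) h <;>
      first
        | exact G.adj_symm h
        | exact Eq.symm h
        | exact False.elim h
        | trivial
  loopless := by
    constructor
    rintro (u | u | u) h
    · exact G.irrefl h
    · exact False.elim h
    · exact False.elim h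

/-- A matching on the crown is regal if every circlet vertex and every arch vertex is
matched. -/
def IsRegal {V : Type*} (Mh : Set (Sym2 (V ⊕ V ⊕ V))) : Prop :=
  (∀ u : V, Matched Mh (Sum.inl u)) ∧ (∀ u : V, Matched Mh (Sum.inr (Sum.inl u)))

/-- An `M`-augmenting path: a path with at least one edge, whose edges alternate between
not in `M` and in `M`, and whose endpoints are `M`-unmatched. -/
def IsAugPath {V : Type*} (G : SimpleGraph V) (M : Set (Sym2 V)) {a b : V}
    (p : G.Walk a b) : Prop :=
  p.IsPath ∧ p.edges ≠ [] ∧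
    List.Chain' (fun e f => (e ∈ M ↔ f ∉ M)) p.edges ∧
    ¬ Matched M a ∧ ¬ Matched M b

private lemma walk_cons_of_ne {α : Type*} {G : SimpleGraph α} {a b : α} (p : G.Walk a b)
    (h : a ≠ b) : ∃ (c : α) (h₀ : G.Adj a c) (q : G.Walk c b), p = SimpleGraph.Walk.cons h₀ q := by
  cases p with
  | nil => exact absurd rfl h
  | cons h q => exact ⟨_, ‹_›, q, rfl⟩

private lemma arch_of_adj_monde {V : Type*} {G : SimpleGraph V} {u : V} {x : V ⊕ V ⊕ V}
    (h : (crown G).Adj (Sum.inr (Sum.inr u)) x) : ∃ w, x = Sum.inr (Sum.inl w) := by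
  rcases x with w | w | w
  · exact h.elim
  · exact ⟨w, rfl⟩
  · exact h.elim

open SimpleGraph in
private lemma crown_aux {V : Type*} (G : SimpleGraph V) (Mh : Set (Sym2 (V ⊕ V ⊕ V)))
    (hMh : IsMatching (crown G) Mh) (hreg : IsRegal Mh) :
    ∀ (n : ℕ) (a b : V ⊕ V ⊕ V) (p : (crown G).Walk a b), p.length ≤ n →
      IsAugPath (crown G) Mh p →
      ∃ (a b : V ⊕ V ⊕ V) (p : (crown G).Walk a b), IsAugPath (crown G) Mh p ∧
        ∀ x ∈ p.support, x ≠ a → x ≠ b → ∀ u : V, x ≠ Sum.inr (Sum.inr u) := by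
  classical
  intro n
  induction n with
  | zero =>
    intro a b p hlen hp
    obtain ⟨_, hne, _⟩ := hp
    refine absurd (List.length_eq_zero_iff.mp ?_) hne
    rw [p.length_edges]; omega
  | succ n ih =>
    intro a b p hlen hp
    rcases Classical.em (∀ x ∈ p.support, x ≠ a → x ≠ b → ∀ u : V, x ≠ Sum.inr (Sum.inr u)) with hmonde | hmonde
    · exact ⟨a, b, p, hp, hmonde⟩
    obtain ⟨hpath, hne, hchain, hua, hub⟩ := hp
    push_neg at hmonde
    obtain ⟨m, hmsup, hma, hmb, um, hmx⟩ := hmonde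
    subst hmx
    obtain ⟨va, rfl⟩ : ∃ u, a = Sum.inr (Sum.inr u) := by
      rcases a with u | u | u
      · exact absurd (hreg.1 u) hua
      · exact absurd (hreg.2 u) hua
      · exact ⟨u, rfl⟩
    obtain ⟨vb, rfl⟩ : ∃ u, b = Sum.inr (Sum.inr u) := by
      rcases b with u | u | u
      · exact absurd (hreg.1 u) hub
      · exact absurd (hreg.2 u) hub
      · exact ⟨u, rfl⟩
    have hedge_a : ∀ x, s(Sum.inr (Sum.inr va), x) ∉ Mh :=
      fun x hx => hua ⟨_, hx, Sym2.mem_mk_left _ _⟩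
    have hedge_b : ∀ x, s(Sum.inr (Sum.inr vb), x) ∉ Mh :=
      fun x hx => hub ⟨_, hx, Sym2.mem_mk_left _ _⟩
    set q := p.takeUntil _ hmsup with hq_def
    set r := p.dropUntil _ hmsup with hr_def
    have hspec : q.append r = p := p.take_spec hmsup
    have hq : q.IsPath := hpath.takeUntil hmsup
    have hr : r.IsPath := hpath.dropUntil hmsup
    have hedges : p.edges = q.edges ++ r.edges := by rw [← hspec, Walk.edges_append]
    have hsupp : p.support = q.support ++ r.support.tail := by rw [← hspec, Walk.support_append]
    have hlensum : q.length + r.length = p.length := by rw [← hspec, Walk.length_append]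
    have hnodup := hpath.support_nodup
    rw [hsupp, List.nodup_append] at hnodup
    obtain ⟨hndq, hndr, hdisj⟩ := hnodup
    obtain ⟨r₂, hmr₂, r', hr'eq⟩ := walk_cons_of_ne r hmb
    obtain ⟨w₂, rfl⟩ := arch_of_adj_monde hmr₂
    have hrtail : r.support.tail = r'.support := by rw [hr'eq]; simp
    have hredges : r.edges =
        s(Sum.inr (Sum.inr um), Sum.inr (Sum.inl w₂)) :: r'.edges := by
      rw [hr'eq, Walk.edges_cons]
    have hq1 : 1 ≤ q.length := by
      rcases Nat.eq_zero_or_pos q.length with h0 | h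
      · exact absurd (Walk.eq_of_length_eq_zero h0).symm hma
      · exact h
    rw [hedges, List.Chain', List.isChain_append] at hchain
    obtain ⟨cq, cr, cjunc⟩ := hchain
    rw [hredges] at cr
    by_cases he₂ : s(Sum.inr (Sum.inr um), Sum.inr (Sum.inl w₂)) ∈ Mh
    · -- the edge out of m is matched: shortcut from the vertex before m to b
      obtain ⟨sv, hms, w, hwq⟩ := walk_cons_of_ne q.reverse hma
      obtain ⟨ws, rfl⟩ := arch_of_adj_monde hms
      have hqe : q = (Walk.cons hms w).reverse := by rw [← hwq, Walk.reverse_reverse]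
      have hbs : (crown G).Adj (Sum.inr (Sum.inr vb)) (Sum.inr (Sum.inl ws)) := trivial
      have hqedges : q.edges = w.edges.reverse ++
          [s(Sum.inr (Sum.inr um), Sum.inr (Sum.inl ws))] := by
        rw [hqe, Walk.edges_reverse, Walk.edges_cons, List.reverse_cons]
      have hp'edges : (Walk.cons hbs w).reverse.edges = w.edges.reverse ++
          [s(Sum.inr (Sum.inr vb), Sum.inr (Sum.inl ws))] := by
        rw [Walk.edges_reverse, Walk.edges_cons, List.reverse_cons]
      rw [hqedges, List.isChain_append] at cq
      obtain ⟨cw, -, cjq⟩ := cq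
      have hsm : s(Sum.inr (Sum.inr um), Sum.inr (Sum.inl ws)) ∉ Mh := by
        have h1 : s(Sum.inr (Sum.inr um), Sum.inr (Sum.inl ws)) ∈ q.edges.getLast? := by
          rw [hqedges]; simp
        have h2 : s(Sum.inr (Sum.inr um), Sum.inr (Sum.inl w₂)) ∈ r.edges.head? := by
          rw [hredges]; simp
        have := cjunc _ h1 _ h2
        tauto
      have hwne : w.edges ≠ [] := by
        intro h0
        have hl0 : w.length = 0 := by rw [← w.length_edges, h0]; rfl
        have := Walk.eq_of_length_eq_zero hl0
        simp at this
      have hlast : ∀ x ∈ w.edges.reverse.getLast?, x ∈ Mh := by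
        intro x hx
        have := cjq x hx (s(Sum.inr (Sum.inr um), Sum.inr (Sum.inl ws))) (by simp)
        tauto
      have cchain : List.Chain' (fun e f => (e ∈ Mh ↔ f ∉ Mh))
          (Walk.cons hbs w).reverse.edges := by
        rw [hp'edges, List.Chain', List.isChain_append]
        refine ⟨cw, List.isChain_singleton _, ?_⟩
        intro x hx y hy
        simp only [List.head?_cons, Option.mem_some_iff] at hy
        subst hy
        exact ⟨fun _ => hedge_b _, fun _ => hlast x hx⟩
      have hbq : (Sum.inr (Sum.inr vb) : V ⊕ V ⊕ V) ∉ q.support := by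
        intro hmem
        exact hdisj _ hmem _ (by rw [hrtail]; exact r'.end_mem_support) rfl
      have hbw : (Sum.inr (Sum.inr vb) : V ⊕ V ⊕ V) ∉ w.support := by
        intro hmem
        apply hbq
        have h1 : (Sum.inr (Sum.inr vb) : V ⊕ V ⊕ V) ∈ q.reverse.support := by
          rw [hwq, Walk.support_cons]; exact List.mem_cons_of_mem _ hmem
        rwa [Walk.support_reverse, List.mem_reverse] at h1
      have hwpath : w.IsPath := by
        have h1 := hq.reverse
        rw [hwq] at h1
        exact h1.of_cons
      have hp'path : (Walk.cons hbs w).reverse.IsPath :=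
        ((Walk.cons_isPath_iff _ _).mpr ⟨hwpath, hbw⟩).reverse
      refine ih _ _ (Walk.cons hbs w).reverse ?_
        ⟨hp'path, by rw [hp'edges]; simp, cchain, hua, hub⟩
      have hql : q.length = w.length + 1 := by rw [hqe]; simp
      have hrl : r.length = r'.length + 1 := by rw [hr'eq]; simp
      have hpl : (Walk.cons hbs w).reverse.length = w.length + 1 := by simp
      omega
    · -- the edge out of m is unmatched: shortcut from a to the vertex after m
      have haR : (crown G).Adj (Sum.inr (Sum.inr va)) (Sum.inr (Sum.inl w₂)) := trivial
      obtain ⟨cr1, cr2⟩ := List.isChain_cons.mp cr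
      have hr'path : r'.IsPath := by
        have h1 := hr
        rw [hr'eq] at h1
        exact h1.of_cons
      have har' : (Sum.inr (Sum.inr va) : V ⊕ V ⊕ V) ∉ r'.support := by
        intro hmem
        exact hdisj _ q.start_mem_support _ (by rw [hrtail]; exact hmem) rfl
      refine ih _ _ (Walk.cons haR r') ?_
        ⟨(Walk.cons_isPath_iff _ _).mpr ⟨hr'path, har'⟩, by simp, ?_, hua, hub⟩
      · have hrl : r.length = r'.length + 1 := by rw [hr'eq]; simp
        simp only [Walk.length_cons]
        omega
      · rw [Walk.edges_cons, List.Chain', List.isChain_cons]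
        refine ⟨?_, cr2⟩
        intro y hy
        have h1 := cr1 y hy
        have h2 : y ∈ Mh := by tauto
        exact ⟨fun hx => absurd hx (hedge_a _), fun hyn => absurd h2 hyn⟩

theorem crown_augPath_avoiding_monde {V : Type*} [Fintype V] (G : SimpleGraph V)
    (Mh : Set (Sym2 (V ⊕ V ⊕ V))) (hMh : IsMatching (crown G) Mh) (hreg : IsRegal Mh)
    (h : ∃ (a b : V ⊕ V ⊕ V) (p : (crown G).Walk a b), IsAugPath (crown G) Mh p) :
    ∃ (a b : V ⊕ V ⊕ V) (p : (crown G).Walk a b), IsAugPath (crown G) Mh p ∧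
      ∀ x ∈ p.support, x ≠ a → x ≠ b → ∀ u : V, x ≠ Sum.inr (Sum.inr u) := by
  obtain ⟨a, b, p, hp⟩ := h
  exact crown_aux G Mh hMh hreg p.length a b p le_rfl hp
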